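/- arXiv:2403.03275 — 2 statements merged into one kernel-verified Lean document; each statement's English description precedes it below -/
import Mathlib

section
/- For all a,b>0, N≥2 and (τ_2,…,τ_N)∈{0,1}^{N−1}, one has f_N(0,τ_2,…,τ_N)=(1+a)·f_{N−1}(τ_2,…,τ_N). -/
open Finset

/-- Partial sum `s^τ(k) = τ_1 + ⋯ + τ_k` of a word `τ ∈ {0,1}^N`. -/
def pSum {N : ℕ} (τ : Fin N → Fin 2) (k : ℕ) : ℤ :=
  ∑ i : Fin N, if (i : ℕ) < k then ((τ i : ℕ) : ℤ) else 0

/-- `min_{0 ≤ j ≤ N} (s^τ(j) − s^ξ(j))`. -/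
def minDiff {N : ℕ} (τ ξ : Fin N → Fin 2) : ℤ :=
  (Finset.range (N + 1)).inf' (by simp) fun j => pSum τ j - pSum ξ j

/-- `f_N(τ) = Σ_ξ b^(s^τ(N)−s^ξ(N)) (ab)^(−min_{0≤j≤N}(s^τ(j)−s^ξ(j)))`. -/
noncomputable def fTL (a b : ℝ) {N : ℕ} (τ : Fin N → Fin 2) : ℝ :=
  ∑ ξ : Fin N → Fin 2, b ^ (pSum τ N - pSum ξ N) * (a * b) ^ (-(minDiff τ ξ))

lemma pSum_zero {N : ℕ} (τ : Fin N → Fin 2) : pSum τ 0 = 0 := by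
  simp [pSum]

lemma pSum_cons_succ {N : ℕ} (c : Fin 2) (τ : Fin N → Fin 2) (k : ℕ) :
    pSum (Fin.cons c τ) (k + 1) = ((c : ℕ) : ℤ) + pSum τ k := by
  unfold pSum
  rw [Fin.sum_univ_succ]
  simp [Nat.succ_lt_succ_iff]

lemma minDiff_le {N : ℕ} (τ ξ : Fin N → Fin 2) {j : ℕ} (hj : j ∈ Finset.range (N + 1)) :
    minDiff τ ξ ≤ pSum τ j - pSum ξ j :=
  Finset.inf'_le _ hj

lemma le_minDiff {N : ℕ} (τ ξ : Fin N → Fin 2) {x : ℤ}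
    (h : ∀ j ∈ Finset.range (N + 1), x ≤ pSum τ j - pSum ξ j) : x ≤ minDiff τ ξ :=
  Finset.le_inf' _ _ h

lemma exists_minDiff {N : ℕ} (τ ξ : Fin N → Fin 2) :
    ∃ j ∈ Finset.range (N + 1), minDiff τ ξ = pSum τ j - pSum ξ j :=
  Finset.exists_mem_eq_inf' _ _

lemma minDiff_nonpos {N : ℕ} (τ ξ : Fin N → Fin 2) : minDiff τ ξ ≤ 0 := by
  have h := minDiff_le τ ξ (j := 0) (by simp)
  simpa [pSum_zero] using h

lemma minDiff_cons {N : ℕ} (c : Fin 2) (τ ξ : Fin N → Fin 2) :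
    minDiff (Fin.cons 0 τ) (Fin.cons c ξ) = minDiff τ ξ - ((c : ℕ) : ℤ) := by
  apply le_antisymm
  · obtain ⟨j₀, hj₀, hm⟩ := exists_minDiff τ ξ
    have hj₀' : j₀ + 1 ∈ Finset.range (N + 1 + 1) := by
      simp only [Finset.mem_range] at hj₀ ⊢; omega
    have h := minDiff_le (Fin.cons 0 τ) (Fin.cons c ξ) hj₀'
    rw [pSum_cons_succ, pSum_cons_succ] at h
    simp only [Fin.val_zero, Nat.cast_zero, zero_add] at h
    omega
  · apply le_minDiff
    intro j hj
    rcases j with _ | k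
    · have h1 := minDiff_nonpos τ ξ
      have h2 : (0 : ℤ) ≤ ((c : ℕ) : ℤ) := by positivity
      simp only [pSum_zero, sub_zero]
      omega
    · have hk : k ∈ Finset.range (N + 1) := by
        simp only [Finset.mem_range] at hj ⊢; omega
      have h := minDiff_le τ ξ hk
      rw [pSum_cons_succ, pSum_cons_succ]
      simp only [Fin.val_zero, Nat.cast_zero, zero_add]
      omega

theorem stmt1 (a b : ℝ) (ha : 0 < a) (hb : 0 < b) (N : ℕ) (hN : 1 ≤ N)
    (τ : Fin N → Fin 2) :
    fTL a b (Fin.cons (0 : Fin 2) τ) = (1 + a) * fTL a b τ := by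
  have hb' : b ≠ 0 := ne_of_gt hb
  have hab : a * b ≠ 0 := by positivity
  unfold fTL
  rw [← (Fin.consEquiv (fun _ : Fin (N+1) => Fin 2)).sum_comp]
  rw [Fintype.sum_prod_type]
  rw [Fin.sum_univ_two]
  have key : ∀ (c : Fin 2) (ξ : Fin N → Fin 2),
      b ^ (pSum (Fin.cons (0:Fin 2) τ) (N+1) - pSum (Fin.cons c ξ) (N+1)) *
        (a * b) ^ (-(minDiff (Fin.cons 0 τ) (Fin.cons c ξ)))
      = (a * b) ^ ((c : ℕ) : ℤ) * b ^ (-((c : ℕ) : ℤ)) *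
        (b ^ (pSum τ N - pSum ξ N) * (a * b) ^ (-(minDiff τ ξ))) := by
    intro c ξ
    rw [pSum_cons_succ, pSum_cons_succ, minDiff_cons]
    simp only [Fin.val_zero, Nat.cast_zero, zero_add, neg_sub]
    rw [show pSum τ N - (((c : ℕ) : ℤ) + pSum ξ N)
        = (pSum τ N - pSum ξ N) + (-((c : ℕ) : ℤ)) by ring]
    rw [show ((c : ℕ) : ℤ) - minDiff τ ξ = ((c : ℕ) : ℤ) + (-(minDiff τ ξ)) by ring]
    rw [zpow_add₀ hb', zpow_add₀ hab]
    ring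
  simp only [show ∀ p : Fin 2 × (Fin N → Fin 2),
      (Fin.consEquiv (fun _ : Fin (N+1) => Fin 2)) p = Fin.cons p.1 p.2 from fun _ => rfl]
  simp only [key]
  simp only [Fin.val_zero, Fin.val_one, Nat.cast_zero, Nat.cast_one, neg_zero, zpow_zero,
    zpow_one, zpow_neg]
  rw [show a * b * b⁻¹ = a by field_simp]
  rw [← Finset.mul_sum, ← Finset.mul_sum]
  ring
end

section
/- Let α,β∈(0,1), set a=(1−α)/α and b=(1−β)/β, and let N≥1. Then the probability vector π(τ):=f_N(τ)/Σ_{τ'∈{0,1}^N} f_N(τ') is the stationary distribution of the open TASEP: Σ_{τ∈{0,1}^N} π(τ)·Q(τ,σ)=0 for every σ∈{0,1}^N. In other words, the stationary measure of the open TASEP with boundary rates α,β is the first-line marginal of the two-line ensemble, in which a pair of words (τ,ξ)∈{0,1}^N×{0,1}^N has probability proportional to b^(s^τ(N)−s^ξ(N))·(ab)^(−min_{0≤j≤N}(s^τ(j)−s^ξ(j))). -/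
open Finset

/-- Off-diagonal rates of the open TASEP generator on `N+1` sites:
rate `α` for entry at site `1`, rate `β` for exit at site `N+1`, rate `1` for each jump. -/
noncomputable def offQ (α β : ℝ) {N : ℕ} (τ τ' : Fin (N + 1) → Fin 2) : ℝ :=
  (if τ 0 = 0 ∧ τ' = Function.update τ 0 1 then α else 0)
    + (if τ (Fin.last N) = 1 ∧ τ' = Function.update τ (Fin.last N) 0 then β else 0)
    + ∑ i : Fin N,
        if τ i.castSucc = 1 ∧ τ i.succ = 0 ∧
            τ' = Function.update (Function.update τ i.castSucc 0) i.succ 1 then (1 : ℝ) else 0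

/-- The open TASEP generator `Q` on `{0,1}^{N+1}`. -/
noncomputable def Qgen (α β : ℝ) {N : ℕ} (τ τ' : Fin (N + 1) → Fin 2) : ℝ :=
  if τ' = τ then -∑ σ ∈ Finset.univ.erase τ, offQ α β τ σ else offQ α β τ τ'


lemma succAbove_val {N : ℕ} (p : Fin (N+1)) (k : Fin N) :
    ((p.succAbove k : Fin (N+1)) : ℕ) = if (k : ℕ) < (p : ℕ) then (k : ℕ) else (k : ℕ) + 1 := by
  rcases lt_or_ge (k : ℕ) (p : ℕ) with h | h
  · rw [Fin.succAbove_of_castSucc_lt p k (by simpa [Fin.lt_def] using h), if_pos h]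
    simp
  · rw [Fin.succAbove_of_le_castSucc p k (by simpa [Fin.le_def] using h), if_neg (by omega)]
    simp

lemma pSum_insertNth {N : ℕ} (p : Fin (N+1)) (x : Fin 2) (u : Fin N → Fin 2) (j : ℕ) :
    pSum (Fin.insertNth p x u) j =
      if j ≤ (p : ℕ) then pSum u j else pSum u (j-1) + ((x : ℕ) : ℤ) := by
  unfold pSum
  rw [Fin.sum_univ_succAbove _ p]
  simp only [Fin.insertNth_apply_same, Fin.insertNth_apply_succAbove]
  by_cases h : j ≤ (p : ℕ)
  · rw [if_pos h, if_neg (by omega)]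
    rw [zero_add]
    refine Finset.sum_congr rfl fun k _ => ?_
    congr 1
    simp only [succAbove_val]
    split_ifs <;> simp <;> omega
  · rw [if_neg h, if_pos (by omega), add_comm]
    congr 1
    refine Finset.sum_congr rfl fun k _ => ?_
    congr 1
    simp only [succAbove_val]
    have hk := k.isLt
    have hp := p.isLt
    split_ifs <;> simp <;> omega

lemma pSum_succ_le {N : ℕ} (η : Fin N → Fin 2) (k : ℕ) :
    pSum η (k+1) ≤ pSum η k + 1 := by
  have h1 : pSum η (k+1) ≤ pSum η k + ∑ i : Fin N, (if (i : ℕ) = k then (1:ℤ) else 0) := by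
    unfold pSum
    rw [← Finset.sum_add_distrib]
    apply Finset.sum_le_sum
    intro i _
    have : ((η i : ℕ) : ℤ) ≤ 1 := by have := (η i).isLt; omega
    split_ifs <;> omega
  have h2 : (∑ i : Fin N, (if (i : ℕ) = k then (1:ℤ) else 0)) ≤ 1 := by
    by_cases hk : k < N
    · have : ∀ i : Fin N, ((i : ℕ) = k) = (i = ⟨k, hk⟩) := by
        intro i; simp [Fin.ext_iff]
      simp only [this]
      rw [Finset.sum_ite_eq' Finset.univ (⟨k, hk⟩ : Fin N) (fun _ => (1:ℤ))]
      simp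
    · have : ∀ i : Fin N, ((i : ℕ) = k) = False := by
        intro i; have := i.isLt; simp; omega
      simp only [this]
      simp
  omega

lemma inf'_insert_eq {M : ℕ} (r : ℕ) (hr : r ≤ M + 1) (D D' : ℕ → ℤ)
    (h1 : ∀ j, j < r → D j = D' j)
    (h2 : ∀ j, r < j → j ≤ M + 1 → D j = D' (j - 1))
    (hmid : ∃ j, j ≤ M ∧ D' j ≤ D r) :
    (Finset.range (M+2)).inf' (by simp) D = (Finset.range (M+1)).inf' (by simp) D' := by
  apply le_antisymm
  · apply Finset.le_inf'
    intro j hj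
    rw [Finset.mem_range] at hj
    rcases lt_or_ge j r with h | h
    · rw [← h1 j h]
      exact Finset.inf'_le _ (by simp; omega)
    · rw [show D' j = D (j+1) by rw [h2 (j+1) (by omega) (by omega)]; simp]
      exact Finset.inf'_le _ (by simp; omega)
  · apply Finset.le_inf'
    intro j hj
    rw [Finset.mem_range] at hj
    rcases lt_trichotomy j r with h | h | h
    · rw [h1 j h]
      exact Finset.inf'_le _ (by simp; omega)
    · subst h
      obtain ⟨j₀, hj₀, hle⟩ := hmid
      exact le_trans (Finset.inf'_le _ (by simp; omega)) hle
    · rw [h2 j h (by omega)]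
      exact Finset.inf'_le _ (by simp; omega)

lemma inf'_shift {M : ℕ} (c : ℤ) (hc : 0 ≤ c) (D D' : ℕ → ℤ)
    (h0 : D 0 = 0) (hD'0 : D' 0 = 0)
    (h : ∀ j, j ≤ M → D (j+1) = D' j - c) :
    (Finset.range (M+2)).inf' (by simp) D = (Finset.range (M+1)).inf' (by simp) D' - c := by
  apply le_antisymm
  · obtain ⟨j, hj, hj2⟩ := Finset.exists_mem_eq_inf' (s := Finset.range (M+1)) (by simp) D'
    rw [Finset.mem_range] at hj
    rw [hj2, ← h j (by omega)]
    exact Finset.inf'_le _ (by simp; omega)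
  · apply Finset.le_inf'
    intro j hj
    rw [Finset.mem_range] at hj
    match j with
    | 0 =>
      have : (Finset.range (M+1)).inf' (by simp) D' ≤ 0 := by
        rw [← hD'0]; exact Finset.inf'_le _ (by simp)
      omega
    | (k+1) =>
      rw [h k (by omega)]
      have : (Finset.range (M+1)).inf' (by simp) D' ≤ D' k :=
        Finset.inf'_le _ (by simp; omega)
      omega

lemma fTL_reindex (a b : ℝ) {N : ℕ} (p : Fin (N+1)) (τ : Fin (N+1) → Fin 2) :
    fTL a b τ = ∑ y : Fin 2, ∑ η : Fin N → Fin 2,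
      b ^ (pSum τ (N+1) - pSum (Fin.insertNth p y η) (N+1)) *
        (a * b) ^ (-(minDiff τ (Fin.insertNth p y η))) := by
  unfold fTL
  rw [← Equiv.sum_comp (Fin.insertNthEquiv (fun _ => Fin 2) p), Fintype.sum_prod_type]
  rfl

lemma fin2 (x : Fin 2) : x = 0 ∨ x = 1 := by omega

lemma fTL_left (a b : ℝ) (ha : a ≠ 0) (hb : b ≠ 0) {N : ℕ} (u : Fin N → Fin 2) :
    fTL a b (Fin.insertNth 0 0 u) = (1 + a) * fTL a b u := by
  rw [fTL_reindex a b 0]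
  have hps : ∀ (y : Fin 2) (η : Fin N → Fin 2) (j : ℕ),
      pSum (Fin.insertNth (0 : Fin (N+1)) y η) j =
        if j = 0 then 0 else pSum η (j-1) + ((y : ℕ) : ℤ) := by
    intro y η j
    rw [pSum_insertNth]
    rcases Nat.eq_zero_or_pos j with h | h
    · subst h; simp [pSum_zero]
    · rw [if_neg (by simp; omega), if_neg (by omega)]
  have hmd : ∀ (y : Fin 2) (η : Fin N → Fin 2),
      minDiff (Fin.insertNth (0 : Fin (N+1)) 0 u) (Fin.insertNth 0 y η) =
        minDiff u η - ((y : ℕ) : ℤ) := by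
    intro y η
    unfold minDiff
    exact inf'_shift ((y : ℕ) : ℤ) (by positivity) _ _
      (by rw [hps, hps]; simp)
      (by rw [pSum_zero, pSum_zero]; ring)
      (fun j hj => by rw [hps, hps]; simp; ring)
  have key : ∀ (y : Fin 2) (η : Fin N → Fin 2),
      b ^ (pSum (Fin.insertNth (0:Fin (N+1)) 0 u) (N+1) - pSum (Fin.insertNth 0 y η) (N+1)) *
        (a * b) ^ (-(minDiff (Fin.insertNth (0:Fin (N+1)) 0 u) (Fin.insertNth 0 y η))) =
      (if y = 1 then a else 1) *
        (b ^ (pSum u N - pSum η N) * (a * b) ^ (-(minDiff u η))) := by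
    intro y η
    rw [hmd, hps, hps]
    simp only [Fin.val_zero, Nat.cast_zero, add_zero, Nat.add_sub_cancel,
      if_neg (Nat.succ_ne_zero N)]
    rcases fin2 y with h | h <;> subst h
    · simp
    · rw [if_pos rfl]
      simp only [Fin.val_one, Nat.cast_one]
      rw [show pSum u N - (pSum η N + 1) = (pSum u N - pSum η N) + (-1) by ring,
        show -(minDiff u η - 1) = (-minDiff u η) + 1 by ring,
        zpow_add₀ hb, zpow_add₀ (mul_ne_zero ha hb), zpow_one, zpow_neg_one]
      field_simp
  simp only [key]
  rw [Fin.sum_univ_two]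
  simp only [show ((0:Fin 2) = 1) = False by simp, show ((1:Fin 2) = 1) = True by simp,
    if_true, if_false]
  unfold fTL
  rw [← Finset.sum_add_distrib]
  rw [Finset.mul_sum]
  refine Finset.sum_congr rfl fun η _ => by ring

lemma fTL_right (a b : ℝ) (ha : a ≠ 0) (hb : b ≠ 0) {N : ℕ} (w : Fin N → Fin 2) :
    fTL a b (Fin.insertNth (Fin.last N) 1 w) = (1 + b) * fTL a b w := by
  rw [fTL_reindex a b (Fin.last N)]
  have hps : ∀ (y : Fin 2) (η : Fin N → Fin 2) (j : ℕ),
      pSum (Fin.insertNth (Fin.last N) y η) j =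
        if j ≤ N then pSum η j else pSum η (j-1) + ((y : ℕ) : ℤ) := by
    intro y η j
    rw [pSum_insertNth]
    simp [Fin.val_last]
  have hmd : ∀ (y : Fin 2) (η : Fin N → Fin 2),
      minDiff (Fin.insertNth (Fin.last N) 1 w) (Fin.insertNth (Fin.last N) y η) =
        minDiff w η := by
    intro y η
    unfold minDiff
    refine inf'_insert_eq (N+1) (le_refl _) _ _ (fun j hj => ?_) (fun j hj hj' => by omega)
      ⟨N, le_refl _, ?_⟩
    · rw [hps, hps, if_pos (by omega), if_pos (by omega)]
    · rw [hps, hps, if_neg (by omega), if_neg (by omega)]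
      simp only [Nat.add_sub_cancel, Fin.val_one, Nat.cast_one]
      have : ((y : ℕ) : ℤ) ≤ 1 := by have := y.isLt; omega
      omega
  have key : ∀ (y : Fin 2) (η : Fin N → Fin 2),
      b ^ (pSum (Fin.insertNth (Fin.last N) 1 w) (N+1) - pSum (Fin.insertNth (Fin.last N) y η) (N+1)) *
        (a * b) ^ (-(minDiff (Fin.insertNth (Fin.last N) 1 w) (Fin.insertNth (Fin.last N) y η))) =
      (if y = 1 then 1 else b) *
        (b ^ (pSum w N - pSum η N) * (a * b) ^ (-(minDiff w η))) := by
    intro y η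
    rw [hmd, hps, hps, if_neg (by omega), if_neg (by omega)]
    simp only [Nat.add_sub_cancel, Fin.val_one, Nat.cast_one]
    rcases fin2 y with h | h <;> subst h
    · simp only [Fin.val_zero, Nat.cast_zero, add_zero,
        show ((0:Fin 2) = 1) = False by simp, if_false]
      rw [show pSum w N + 1 - pSum η N = (pSum w N - pSum η N) + 1 by ring,
        zpow_add₀ hb, zpow_one]
      ring
    · simp only [Fin.val_one, Nat.cast_one, if_true]
      rw [show pSum w N + 1 - (pSum η N + 1) = pSum w N - pSum η N by ring]
      simp
  simp only [key]
  rw [Fin.sum_univ_two]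
  simp only [show ((0:Fin 2) = 1) = False by simp, show ((1:Fin 2) = 1) = True by simp,
    if_true, if_false]
  unfold fTL
  rw [← Finset.sum_add_distrib, Finset.mul_sum]
  exact Finset.sum_congr rfl fun η _ => by ring

lemma fTL_mid (a b : ℝ) (ha : a ≠ 0) (hb : b ≠ 0) {N : ℕ} (w : Fin (N+1) → Fin 2)
    (i : Fin N) (hc : w i.castSucc = 1) (hs : w i.succ = 0) :
    fTL a b w = fTL a b (w ∘ (i.succ).succAbove) + fTL a b (w ∘ (i.castSucc).succAbove) := by
  set u₁ : Fin N → Fin 2 := w ∘ (i.succ).succAbove with hu₁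
  set u₂ : Fin N → Fin 2 := w ∘ (i.castSucc).succAbove with hu₂
  have hw1 : w = Fin.insertNth i.succ 0 u₁ := by
    rw [hu₁]; rw [← hs]; exact (Fin.insertNth_self_removeNth i.succ w).symm
  have hw2 : w = Fin.insertNth i.castSucc 1 u₂ := by
    rw [hu₂]; rw [← hc]; exact (Fin.insertNth_self_removeNth i.castSucc w).symm
  have hvs : ((i.succ : Fin (N+1)) : ℕ) = (i : ℕ) + 1 := rfl
  have hvc : ((i.castSucc : Fin (N+1)) : ℕ) = (i : ℕ) := rfl
  rw [fTL_reindex a b i.succ]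
  have hps : ∀ (y : Fin 2) (η : Fin N → Fin 2) (j : ℕ),
      pSum (Fin.insertNth i.succ y η) j =
        if j ≤ (i : ℕ) + 1 then pSum η j else pSum η (j-1) + ((y : ℕ) : ℤ) := by
    intro y η j; rw [pSum_insertNth, hvs]
  -- case y = 0 : term equals term for (u₁, η)
  have key0 : ∀ η : Fin N → Fin 2,
      b ^ (pSum w (N+1) - pSum (Fin.insertNth i.succ 0 η) (N+1)) *
        (a * b) ^ (-(minDiff w (Fin.insertNth i.succ 0 η))) =
      b ^ (pSum u₁ N - pSum η N) * (a * b) ^ (-(minDiff u₁ η)) := by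
    intro η
    have hpw : ∀ j : ℕ, pSum w j = if j ≤ (i : ℕ) + 1 then pSum u₁ j else pSum u₁ (j-1) := by
      intro j
      conv_lhs => rw [hw1]
      rw [pSum_insertNth, hvs]
      split_ifs <;> simp
    have hmd : minDiff w (Fin.insertNth i.succ 0 η) = minDiff u₁ η := by
      unfold minDiff
      refine inf'_insert_eq ((i:ℕ)+1) (by have := i.isLt; omega) _ _
        (fun j hj => ?_) (fun j hj hj' => ?_) ⟨(i:ℕ)+1, by have := i.isLt; omega, ?_⟩
      · rw [hpw, hps, if_pos (by omega), if_pos (by omega)]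
      · rw [hpw, hps, if_neg (by omega), if_neg (by omega)]; simp
      · rw [hpw, hps, if_pos (by omega), if_pos (by omega)]
    have hN : pSum w (N+1) = pSum u₁ N := by
      rw [hpw, if_neg (by have := i.isLt; omega)]; simp
    rw [hmd, hN, hps, if_neg (by have := i.isLt; omega)]
    simp
  -- case y = 1 : term equals term for (u₂, η)
  have key1 : ∀ η : Fin N → Fin 2,
      b ^ (pSum w (N+1) - pSum (Fin.insertNth i.succ 1 η) (N+1)) *
        (a * b) ^ (-(minDiff w (Fin.insertNth i.succ 1 η))) =
      b ^ (pSum u₂ N - pSum η N) * (a * b) ^ (-(minDiff u₂ η)) := by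
    intro η
    have hpw : ∀ j : ℕ, pSum w j =
        if j ≤ (i : ℕ) then pSum u₂ j else pSum u₂ (j-1) + 1 := by
      intro j
      conv_lhs => rw [hw2]
      rw [pSum_insertNth, hvc]
      split_ifs <;> simp
    have hmd : minDiff w (Fin.insertNth i.succ 1 η) = minDiff u₂ η := by
      unfold minDiff
      refine inf'_insert_eq ((i:ℕ)+1) (by have := i.isLt; omega) _ _
        (fun j hj => ?_) (fun j hj hj' => ?_) ⟨(i:ℕ), by have := i.isLt; omega, ?_⟩
      · rw [hpw, hps, if_pos (by omega), if_pos (by omega)]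
      · rw [hpw, hps, if_neg (by omega), if_neg (by omega)]
        simp only [Fin.val_one, Nat.cast_one]; ring
      · rw [hpw, hps, if_neg (by omega), if_pos (by omega)]
        simp only [Nat.add_sub_cancel]
        have h1 : pSum η ((i:ℕ)+1) ≤ pSum η (i:ℕ) + 1 := pSum_succ_le η (i:ℕ)
        omega
    have hN : pSum w (N+1) = pSum u₂ N + 1 := by
      rw [hpw, if_neg (by have := i.isLt; omega)]; simp
    have hNx : pSum (Fin.insertNth i.succ 1 η) (N+1) = pSum η N + 1 := by
      rw [hps, if_neg (by have := i.isLt; omega)]; simp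
    rw [hmd, hN, hNx, show pSum u₂ N + 1 - (pSum η N + 1) = pSum u₂ N - pSum η N by ring]
  rw [Fin.sum_univ_two]
  simp only [key0, key1]
  unfold fTL
  ring

lemma upd_eq_insertNth {N : ℕ} (σ : Fin (N+1) → Fin 2) (p : Fin (N+1)) (v : Fin 2) :
    Function.update σ p v = Fin.insertNth p v (σ ∘ p.succAbove) := by
  have h : Fin.removeNth p (Function.update σ p v) = σ ∘ p.succAbove := by
    funext k
    simp only [Fin.removeNth, Function.comp_apply]
    rw [Function.update_of_ne (Fin.succAbove_ne p k)]
  conv_lhs => rw [← Fin.insertNth_self_removeNth p (Function.update σ p v)]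
  rw [h, Function.update_self]

section W
variable {N : ℕ} (σ : Fin (N+1) → Fin 2) (i : Fin N)

lemma cA_lt {k : Fin N} (hk : (k:ℕ) < (i:ℕ)) : (i.castSucc).succAbove k = k.castSucc :=
  Fin.succAbove_of_castSucc_lt _ _ (by simp only [Fin.lt_def, Fin.coe_castSucc]; omega)

lemma cA_ge {k : Fin N} (hk : (i:ℕ) ≤ (k:ℕ)) : (i.castSucc).succAbove k = k.succ :=
  Fin.succAbove_of_le_castSucc _ _ (by simp only [Fin.le_def, Fin.coe_castSucc]; omega)

lemma sA_le {k : Fin N} (hk : (k:ℕ) ≤ (i:ℕ)) : (i.succ).succAbove k = k.castSucc :=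
  Fin.succAbove_of_castSucc_lt _ _
    (by simp only [Fin.lt_def, Fin.coe_castSucc, Fin.val_succ]; omega)

lemma sA_gt {k : Fin N} (hk : (i:ℕ) < (k:ℕ)) : (i.succ).succAbove k = k.succ :=
  Fin.succAbove_of_le_castSucc _ _
    (by simp only [Fin.le_def, Fin.coe_castSucc, Fin.val_succ]; omega)

lemma ne_cs {k : Fin N} (hk : (k:ℕ) ≠ (i:ℕ)) : k.castSucc ≠ i.castSucc := by
  simp only [ne_eq, Fin.ext_iff, Fin.coe_castSucc]; omega

lemma ne_cs' {k : Fin N} (hk : (k:ℕ) ≠ (i:ℕ)+1) : k.castSucc ≠ i.succ := by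
  simp only [ne_eq, Fin.ext_iff, Fin.coe_castSucc, Fin.val_succ]; omega

lemma ne_sc {k : Fin N} : k.succ ≠ i.castSucc → True := fun _ => trivial

lemma W11 (h : σ i.castSucc = σ i.succ) :
    σ ∘ (i.castSucc).succAbove = σ ∘ (i.succ).succAbove := by
  funext k
  simp only [Function.comp_apply]
  rcases lt_trichotomy (k:ℕ) (i:ℕ) with hk | hk | hk
  · rw [cA_lt i hk, sA_le i (by omega)]
  · have hki : k = i := Fin.ext hk
    subst hki
    rw [cA_ge k (le_refl _), sA_le k (le_refl _)]
    exact h.symm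
  · rw [cA_ge i (by omega), sA_gt i hk]
end W

section Wsw
variable {N : ℕ} (σ : Fin (N+1) → Fin 2) (i : Fin N)

lemma upd2_outside {k : Fin (N+1)} (hk1 : k ≠ i.castSucc) (hk2 : k ≠ i.succ) :
    (Function.update (Function.update σ i.succ 0) i.castSucc 1) k = σ k := by
  rw [Function.update_of_ne hk1, Function.update_of_ne hk2]

lemma Wswap1 (h : σ i.succ = 1) :
    (Function.update (Function.update σ i.succ 0) i.castSucc 1) ∘ (i.succ).succAbove
      = σ ∘ (i.castSucc).succAbove := by
  funext k
  simp only [Function.comp_apply]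
  rcases lt_trichotomy (k:ℕ) (i:ℕ) with hk | hk | hk
  · rw [sA_le i (by omega), cA_lt i hk,
      upd2_outside σ i (ne_cs i (by omega)) (ne_cs' i (by omega))]
  · have hki : k = i := Fin.ext hk
    subst hki
    rw [sA_le k (le_refl _), cA_ge k (le_refl _), Function.update_self, h]
  · rw [sA_gt i hk, cA_ge i (by omega),
      upd2_outside σ i (by simp only [ne_eq, Fin.ext_iff, Fin.val_succ, Fin.coe_castSucc]; omega)
        (by simp only [ne_eq, Fin.ext_iff, Fin.val_succ]; omega)]

lemma Wswap2 (h : σ i.castSucc = 0) :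
    (Function.update (Function.update σ i.succ 0) i.castSucc 1) ∘ (i.castSucc).succAbove
      = σ ∘ (i.succ).succAbove := by
  funext k
  simp only [Function.comp_apply]
  rcases lt_trichotomy (k:ℕ) (i:ℕ) with hk | hk | hk
  · rw [cA_lt i hk, sA_le i (by omega),
      upd2_outside σ i (ne_cs i (by omega)) (ne_cs' i (by omega))]
  · have hki : k = i := Fin.ext hk
    subst hki
    rw [cA_ge k (le_refl _), sA_le k (le_refl _),
      Function.update_of_ne (Fin.castSucc_lt_succ : k.castSucc < k.succ).ne.symm, Function.update_self]
    exact h.symm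
  · rw [cA_ge i (by omega), sA_gt i hk,
      upd2_outside σ i (by simp only [ne_eq, Fin.ext_iff, Fin.val_succ, Fin.coe_castSucc]; omega)
        (by simp only [ne_eq, Fin.ext_iff, Fin.val_succ]; omega)]
end Wsw

lemma mySumCollapse {I : Type*} [Fintype I] [DecidableEq I] (P : Prop) [Decidable P]
    (t : I) (g : I → ℝ) :
    ∑ x : I, (if P ∧ x = t then g x else 0) = if P then g t else 0 := by
  rw [Finset.sum_congr rfl (fun x _ => show (if P ∧ x = t then g x else 0)
      = if x = t then (if P then g x else 0) else 0 by split_ifs <;> tauto)]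
  rw [Finset.sum_ite_eq' Finset.univ t]
  simp

lemma mySumCollapse3 {I : Type*} [Fintype I] [DecidableEq I] (P Q : Prop) [Decidable P]
    [Decidable Q] (t : I) (g : I → ℝ) :
    ∑ x : I, (if P ∧ Q ∧ x = t then g x else 0) = if P ∧ Q then g t else 0 := by
  rw [Finset.sum_congr rfl (fun x _ => show (if P ∧ Q ∧ x = t then g x else 0)
      = if x = t then (if P ∧ Q then g x else 0) else 0 by split_ifs <;> tauto)]
  rw [Finset.sum_ite_eq' Finset.univ t]
  simp

lemma tele (N : ℕ) (G : Fin (N+1) → ℝ) :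
    ∑ i : Fin N, (G i.succ - G i.castSucc) = G (Fin.last N) - G 0 := by
  induction N with
  | zero => simp [Fin.last]
  | succ n ih =>
    rw [Fin.sum_univ_castSucc]
    have h := ih (fun k => G k.castSucc)
    simp only [Fin.succ_castSucc] at h ⊢
    rw [h]
    simp only [Fin.castSucc_zero, Fin.succ_last]
    ring

lemma fin2' (x : Fin 2) : x = 0 ∨ x = 1 := by omega

-- move-reversal equivalences
lemma Eα {N : ℕ} (σ τ : Fin (N+1) → Fin 2) :
    (τ 0 = 0 ∧ σ = Function.update τ 0 1) ↔
      (σ 0 = 1 ∧ τ = Function.update σ 0 0) := by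
  constructor
  · rintro ⟨h1, rfl⟩
    refine ⟨Function.update_self _ _ _, ?_⟩
    rw [Function.update_idem, ← h1, Function.update_eq_self]
  · rintro ⟨h1, rfl⟩
    refine ⟨Function.update_self _ _ _, ?_⟩
    rw [Function.update_idem, ← h1, Function.update_eq_self]

lemma Eβ {N : ℕ} (σ τ : Fin (N+1) → Fin 2) :
    (τ (Fin.last N) = 1 ∧ σ = Function.update τ (Fin.last N) 0) ↔
      (σ (Fin.last N) = 0 ∧ τ = Function.update σ (Fin.last N) 1) := by
  constructor
  · rintro ⟨h1, rfl⟩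
    refine ⟨Function.update_self _ _ _, ?_⟩
    rw [Function.update_idem, ← h1, Function.update_eq_self]
  · rintro ⟨h1, rfl⟩
    refine ⟨Function.update_self _ _ _, ?_⟩
    rw [Function.update_idem, ← h1, Function.update_eq_self]

lemma Ebulk {N : ℕ} (σ τ : Fin (N+1) → Fin 2) (i : Fin N) :
    (τ i.castSucc = 1 ∧ τ i.succ = 0 ∧
        σ = Function.update (Function.update τ i.castSucc 0) i.succ 1) ↔
      (σ i.castSucc = 0 ∧ σ i.succ = 1 ∧
        τ = Function.update (Function.update σ i.succ 0) i.castSucc 1) := by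
  have hne : i.castSucc ≠ i.succ := (Fin.castSucc_lt_succ : i.castSucc < i.succ).ne
  constructor
  · rintro ⟨h1, h2, rfl⟩
    refine ⟨?_, Function.update_self _ _ _, ?_⟩
    · rw [Function.update_of_ne hne, Function.update_self]
    · funext x
      simp only [Function.update_apply]
      split_ifs with hx hy <;> [skip; skip; rfl]
      · subst hx; exact h1
      · subst hy; exact h2
  · rintro ⟨h1, h2, rfl⟩
    refine ⟨Function.update_self _ _ _, ?_, ?_⟩
    · rw [Function.update_of_ne hne.symm, Function.update_self]
    · funext x
      simp only [Function.update_apply]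
      split_ifs with hx hy <;> [skip; skip; rfl]
      · subst hx; exact h2
      · subst hy; exact h1

lemma offQ_self {α β : ℝ} {N : ℕ} (σ : Fin (N+1) → Fin 2) : offQ α β σ σ = 0 := by
  unfold offQ
  rw [if_neg, if_neg, Finset.sum_eq_zero, add_zero, add_zero]
  · intro i _
    rw [if_neg]
    rintro ⟨h1, h2, h3⟩
    have := congrFun h3 i.succ
    rw [Function.update_self, h2] at this
    exact absurd this (by decide)
  · rintro ⟨h1, h2⟩
    have := congrFun h2 (Fin.last N)
    rw [Function.update_self, h1] at this
    exact absurd this (by decide)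
  · rintro ⟨h1, h2⟩
    have := congrFun h2 (0 : Fin (N+1))
    rw [Function.update_self, h1] at this
    exact absurd this (by decide)


/-- The normalized two-line marginal `π(τ) = f_N(τ)/Σ_{τ'} f_N(τ')`, with
`a = (1−α)/α`, `b = (1−β)/β`, is stationary for the open TASEP. -/
theorem stmt4 (α β : ℝ) (hα : α ∈ Set.Ioo (0:ℝ) 1) (hβ : β ∈ Set.Ioo (0:ℝ) 1)
    (N : ℕ) (σ : Fin (N + 1) → Fin 2) :
    ∑ τ : Fin (N + 1) → Fin 2,
      (fTL ((1 - α) / α) ((1 - β) / β) τ /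
          ∑ τ' : Fin (N + 1) → Fin 2, fTL ((1 - α) / α) ((1 - β) / β) τ')
        * Qgen α β τ σ = 0 := by
  classical
  obtain ⟨hα0, hα1⟩ := hα
  obtain ⟨hβ0, hβ1⟩ := hβ
  set a : ℝ := (1 - α) / α with hadef
  set b : ℝ := (1 - β) / β with hbdef
  have ha : a ≠ 0 := ne_of_gt (div_pos (by linarith) hα0)
  have hb : b ≠ 0 := ne_of_gt (div_pos (by linarith) hβ0)
  have hαa : α * (1 + a) = 1 := by rw [hadef]; field_simp; ring
  have hβb : β * (1 + b) = 1 := by rw [hbdef]; field_simp; ring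
  have e01 : ((0:Fin 2) = 1) = False := by simp
  have e10 : ((1:Fin 2) = 0) = False := by simp
  have e11 : ((1:Fin 2) = 1) = True := by simp
  have e00 : ((0:Fin 2) = 0) = True := by simp
  suffices H : ∑ τ : Fin (N+1) → Fin 2, fTL a b τ * Qgen α β τ σ = 0 by
    rw [show ∀ Z : ℝ, (∑ τ : Fin (N+1) → Fin 2, fTL a b τ / Z * Qgen α β τ σ)
        = (∑ τ : Fin (N+1) → Fin 2, fTL a b τ * Qgen α β τ σ) / Z from
      fun Z => by rw [Finset.sum_div]; exact Finset.sum_congr rfl fun τ _ => by ring]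
    rw [H, zero_div]
  -- split off the diagonal term
  rw [← Finset.add_sum_erase _ _ (Finset.mem_univ σ)]
  have h1 : Qgen α β σ σ = -∑ x ∈ Finset.univ.erase σ, offQ α β σ x := if_pos rfl
  have h2 : ∑ τ ∈ Finset.univ.erase σ, fTL a b τ * Qgen α β τ σ
      = ∑ τ ∈ Finset.univ.erase σ, fTL a b τ * offQ α β τ σ :=
    Finset.sum_congr rfl fun τ hτ => by
      rw [Qgen, if_neg (Ne.symm (Finset.ne_of_mem_erase hτ))]
  rw [h1, h2, Finset.sum_erase_eq_sub (Finset.mem_univ σ),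
    Finset.sum_erase_eq_sub (Finset.mem_univ σ), offQ_self]
  -- outflow sum
  have hout : ∑ x : Fin (N+1) → Fin 2, offQ α β σ x
      = (if σ 0 = 0 then α else 0) + (if σ (Fin.last N) = 1 then β else 0)
        + ∑ i : Fin N, (if σ i.castSucc = 1 ∧ σ i.succ = 0 then (1:ℝ) else 0) := by
    unfold offQ
    rw [Finset.sum_add_distrib, Finset.sum_add_distrib, Finset.sum_comm]
    congr 1
    · congr 1
      · exact mySumCollapse _ _ (fun _ => α)
      · exact mySumCollapse _ _ (fun _ => β)
    · exact Finset.sum_congr rfl fun i _ => mySumCollapse3 _ _ _ (fun _ => (1:ℝ))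
  -- inflow sum
  have hin : ∑ τ : Fin (N+1) → Fin 2, fTL a b τ * offQ α β τ σ
      = (if σ 0 = 1 then fTL a b (Function.update σ 0 0) * α else 0)
        + (if σ (Fin.last N) = 0 then fTL a b (Function.update σ (Fin.last N) 1) * β else 0)
        + ∑ i : Fin N, (if σ i.castSucc = 0 ∧ σ i.succ = 1 then
            fTL a b (Function.update (Function.update σ i.succ 0) i.castSucc 1) * 1 else 0) := by
    unfold offQ
    simp only [mul_add, Finset.mul_sum, mul_ite, mul_zero]
    rw [Finset.sum_add_distrib, Finset.sum_add_distrib, Finset.sum_comm]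
    congr 1
    · congr 1
      · rw [Finset.sum_congr rfl (fun τ _ =>
          if_congr (Eα σ τ) rfl rfl)]
        exact mySumCollapse _ _ (fun x => fTL a b x * α)
      · rw [Finset.sum_congr rfl (fun τ _ =>
          if_congr (Eβ σ τ) rfl rfl)]
        exact mySumCollapse _ _ (fun x => fTL a b x * β)
    · refine Finset.sum_congr rfl fun i _ => ?_
      rw [Finset.sum_congr rfl (fun τ _ =>
        if_congr (Ebulk σ τ i) rfl rfl)]
      exact mySumCollapse3 _ _ _ (fun x => fTL a b x * 1)
  rw [hin, hout]
  -- the discrete "current" function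
  set G : Fin (N+1) → ℝ :=
    fun k => (if σ k = 1 then (1:ℝ) else -1) * fTL a b (σ ∘ k.succAbove) with hG
  have huA : fTL a b (Function.update σ 0 0)
      = (1 + a) * fTL a b (σ ∘ (0 : Fin (N+1)).succAbove) := by
    rw [upd_eq_insertNth, fTL_left a b ha hb]
  have huB : fTL a b (Function.update σ (Fin.last N) 1)
      = (1 + b) * fTL a b (σ ∘ (Fin.last N).succAbove) := by
    rw [upd_eq_insertNth, fTL_right a b ha hb]
  have LA : (if σ 0 = 1 then fTL a b (Function.update σ 0 0) * α else 0)
      - fTL a b σ * (if σ 0 = 0 then α else 0) = G 0 := by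
    rcases fin2' (σ 0) with h | h
    · have hσf : fTL a b σ = (1 + a) * fTL a b (σ ∘ (0:Fin (N+1)).succAbove) := by
        conv_lhs => rw [show σ = Function.update σ 0 0 by rw [← h, Function.update_eq_self]]
        exact huA
      rw [hσf]
      simp only [hG, h, e01, e00, if_true, if_false]
      linear_combination (-(fTL a b (σ ∘ (0:Fin (N+1)).succAbove))) * hαa
    · rw [huA]
      simp only [hG, h, e11, e10, if_true, if_false]
      linear_combination (fTL a b (σ ∘ (0:Fin (N+1)).succAbove)) * hαa
  have LB : (if σ (Fin.last N) = 0 then fTL a b (Function.update σ (Fin.last N) 1) * β else 0)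
      - fTL a b σ * (if σ (Fin.last N) = 1 then β else 0) = -(G (Fin.last N)) := by
    rcases fin2' (σ (Fin.last N)) with h | h
    · rw [huB]
      simp only [hG, h, e01, e00, if_true, if_false]
      linear_combination (fTL a b (σ ∘ (Fin.last N).succAbove)) * hβb
    · have hσf : fTL a b σ = (1 + b) * fTL a b (σ ∘ (Fin.last N).succAbove) := by
        conv_lhs => rw [show σ = Function.update σ (Fin.last N) 1 by
          rw [← h, Function.update_eq_self]]
        exact huB
      rw [hσf]
      simp only [hG, h, e11, e10, if_true, if_false]
      linear_combination (-(fTL a b (σ ∘ (Fin.last N).succAbove))) * hβb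
  have LC : ∀ i : Fin N,
      (if σ i.castSucc = 0 ∧ σ i.succ = 1 then
          fTL a b (Function.update (Function.update σ i.succ 0) i.castSucc 1) * 1 else 0)
        - fTL a b σ * (if σ i.castSucc = 1 ∧ σ i.succ = 0 then (1:ℝ) else 0)
      = G i.succ - G i.castSucc := by
    intro i
    rcases fin2' (σ i.castSucc) with h1 | h1 <;> rcases fin2' (σ i.succ) with h2 | h2
    · -- (0,0)
      rw [if_neg (by simp [h2]), if_neg (by simp [h1])]
      simp only [hG, h1, h2, e01, if_false]
      rw [W11 σ i (by rw [h1, h2])]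
      ring
    · -- (0,1)
      rw [if_pos ⟨h1, h2⟩, if_neg (by simp [h1])]
      have hsw := fTL_mid a b ha hb
        (Function.update (Function.update σ i.succ 0) i.castSucc 1) i
        (Function.update_self _ _ _)
        (by rw [Function.update_of_ne (Fin.castSucc_lt_succ : i.castSucc < i.succ).ne.symm,
          Function.update_self])
      rw [hsw, Wswap1 σ i h2, Wswap2 σ i h1]
      simp only [hG, h1, h2, e01, e11, if_true, if_false]
      ring
    · -- (1,0)
      rw [if_neg (by simp [h1]), if_pos ⟨h1, h2⟩, fTL_mid a b ha hb σ i h1 h2]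
      simp only [hG, h1, h2, e01, e11, e10, if_true, if_false]
      ring
    · -- (1,1)
      rw [if_neg (by simp [h1]), if_neg (by simp [h2])]
      simp only [hG, h1, h2, e11, if_true]
      rw [W11 σ i (by rw [h1, h2])]
      ring
  rw [show (∑ i : Fin N, (if σ i.castSucc = 0 ∧ σ i.succ = 1 then
        fTL a b (Function.update (Function.update σ i.succ 0) i.castSucc 1) * 1 else 0))
      = ∑ i : Fin N, ((G i.succ - G i.castSucc)
          + fTL a b σ * (if σ i.castSucc = 1 ∧ σ i.succ = 0 then (1:ℝ) else 0)) from
    Finset.sum_congr rfl fun i _ => by linarith [LC i]]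
  rw [Finset.sum_add_distrib, tele, ← Finset.mul_sum]
  linear_combination LA + LB
end
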